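/- Let m = 2r+1 with r ≥ 1 and let T = R_m(P^1, …, P^m) be the composition of tournaments P^1, …, P^m over the highly regular tournament R_m. A subset S of V(T) is acyclic in T if and only if there exists an index i (taken modulo m) such that S ⊆ V(P^i) ∪ V(P^{i+1}) ∪ … ∪ V(P^{i+r}) and, for every j, the intersection S ∩ V(P^j) is acyclic in P^j. -/
import Mathlib


/-- A tournament: an irreflexive relation such that for every pair of distinct
vertices exactly one of the two directions holds. -/
def IsTournament {V : Type*} (rel : V → V → Prop) : Prop :=
  (∀ v, ¬ rel v v) ∧ ∀ u v : V, u ≠ v → (rel u v ↔ ¬ rel v u)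

/-- A set `S` is acyclic (transitive) in a tournament `rel`: the relation restricted
to `S` is transitive; for a tournament this is equivalent to the restriction being a
strict linear order, i.e. to the induced subtournament having no directed cycle. -/
def AcyclicIn {V : Type*} (rel : V → V → Prop) (S : Set V) : Prop :=
  ∀ a ∈ S, ∀ b ∈ S, ∀ c ∈ S, rel a b → rel b c → rel a c

/-- The (acyclic) chromatic number: the least `k` such that there is a coloring of the
vertices with `k` colors all of whose color classes are acyclic sets. -/
noncomputable def chromaticNumber {V : Type*} (rel : V → V → Prop) : ℕ :=
  sInf {k : ℕ | ∃ c : V → Fin k, ∀ i : Fin k, AcyclicIn rel {v | c v = i}}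

/-- The dimension of the acyclic complex of a tournament: the maximum size of an
acyclic set, minus one. -/
noncomputable def acyDim {V : Type*} (rel : V → V → Prop) : ℕ :=
  sSup {n : ℕ | ∃ S : Finset V, AcyclicIn rel ↑S ∧ S.card = n} - 1

/-- The edge relation of the highly regular tournament `R_{2r+1}` on `ZMod (2r+1)`:
`i → j` iff `j ≡ i + l (mod 2r+1)` for some `1 ≤ l ≤ r`. -/
def hrRel (r : ℕ) (i j : ZMod (2 * r + 1)) : Prop :=
  ∃ l : ℕ, 1 ≤ l ∧ l ≤ r ∧ j = i + (l : ZMod (2 * r + 1))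

/-- The edge relation of the composition `R_{2q+1}(P^1, …, P^{2q+1})` of the tournaments
`relP i` over the highly regular tournament `R_{2q+1}`: inside a block use the block's
relation, between different blocks use the highly regular relation on the indices. -/
def compTournRel (q : ℕ) {V : ZMod (2 * q + 1) → Type*} (relP : ∀ i, V i → V i → Prop)
    (u v : Σ i, V i) : Prop :=
  (∃ h : u.1 = v.1, relP v.1 (h ▸ u.2) v.2) ∨ (u.1 ≠ v.1 ∧ hrRel q u.1 v.1)

lemma hr_cast_ne_zero (r : ℕ) {l : ℕ} (h1 : 1 ≤ l) (h2 : l ≤ 2*r) :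
    (l : ZMod (2*r+1)) ≠ 0 := by
  rw [Ne, ZMod.natCast_eq_zero_iff]
  intro hdvd
  exact absurd (Nat.le_of_dvd (by omega) hdvd) (by omega)

lemma hr_irrefl (r : ℕ) (i : ZMod (2*r+1)) : ¬ hrRel r i i := by
  rintro ⟨l, h1, h2, hl⟩
  exact hr_cast_ne_zero r h1 (by omega) (left_eq_add.mp hl)

lemma hr_asymm (r : ℕ) {i j : ZMod (2*r+1)} (h1 : hrRel r i j) (h2 : hrRel r j i) : False := by
  obtain ⟨l1, ha1, hb1, hc1⟩ := h1
  obtain ⟨l2, ha2, hb2, hc2⟩ := h2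
  have h : i = i + ((l1 : ZMod (2*r+1)) + l2) := by rw [← add_assoc, ← hc1, ← hc2]
  have h0 : ((l1 + l2 : ℕ) : ZMod (2*r+1)) = 0 := by
    push_cast; exact (left_eq_add.mp h)
  exact hr_cast_ne_zero r (by omega) (by omega) h0

lemma hr_total (r : ℕ) {i j : ZMod (2*r+1)} (h : i ≠ j) : hrRel r i j ∨ hrRel r j i := by
  set k := (j - i).val with hk
  have hkv : ((k : ℕ) : ZMod (2*r+1)) = j - i := ZMod.natCast_zmod_val _
  have hk0 : k ≠ 0 := by
    intro h0
    apply h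
    have hji : j - i = 0 := by rw [← hkv, h0, Nat.cast_zero]
    exact (sub_eq_zero.mp hji).symm
  have hklt : k < 2*r+1 := ZMod.val_lt _
  by_cases hle : k ≤ r
  · exact Or.inl ⟨k, Nat.one_le_iff_ne_zero.mpr hk0, hle, by rw [hkv]; ring⟩
  · refine Or.inr ⟨2*r+1-k, by omega, by omega, ?_⟩
    have hc : ((2*r+1-k : ℕ) : ZMod (2*r+1)) = -(k : ZMod (2*r+1)) := by
      rw [Nat.cast_sub (by omega)]
      simp
    rw [hc, hkv]; ring

lemma hr_offset (r : ℕ) (i : ZMod (2*r+1)) {la lb : ℕ} (ha : la ≤ r) (hb : lb ≤ r) :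
    hrRel r (i + la) (i + lb) ↔ la < lb := by
  constructor
  · rintro ⟨l, h1, h2, hl⟩
    rw [add_assoc] at hl
    have hz : ((lb:ℕ) : ZMod (2*r+1)) = ((la + l : ℕ) : ZMod (2*r+1)) := by
      push_cast; exact add_left_cancel hl
    have hv := congrArg ZMod.val hz
    rw [ZMod.val_cast_of_lt (by omega), ZMod.val_cast_of_lt (by omega)] at hv
    omega
  · intro hlt
    exact ⟨lb - la, by omega, by omega, by rw [Nat.cast_sub hlt.le]; ring⟩

lemma hr_offset_inj (r : ℕ) (i : ZMod (2*r+1)) {la lb : ℕ} (ha : la ≤ r) (hb : lb ≤ r)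
    (h : i + (la : ZMod (2*r+1)) = i + lb) : la = lb := by
  have h2 := congrArg ZMod.val (add_left_cancel h)
  rw [ZMod.val_cast_of_lt (by omega), ZMod.val_cast_of_lt (by omega)] at h2
  exact h2

/-- Let `m = 2r+1`, `r ≥ 1`, and let `T = R_m(P^1, …, P^m)` be the composition of the
tournaments `relP i` over the highly regular tournament `R_m`. A subset `S` of `V(T)`
is acyclic in `T` iff there is an index `i` (mod `m`) such that
`S ⊆ V(P^i) ∪ … ∪ V(P^{i+r})` and for every `j` the intersection `S ∩ V(P^j)` is
acyclic in `P^j`. -/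
theorem stmt6 (r : ℕ) (hr : 1 ≤ r) (V : ZMod (2 * r + 1) → Type)
    (relP : ∀ i, V i → V i → Prop) (htour : ∀ i, IsTournament (relP i))
    (S : Set (Σ i, V i)) :
    AcyclicIn (compTournRel r relP) S ↔
      ∃ i : ZMod (2 * r + 1),
        (∀ x ∈ S, ∃ l : ℕ, l ≤ r ∧ x.1 = i + (l : ZMod (2 * r + 1))) ∧
        ∀ j : ZMod (2 * r + 1),
          AcyclicIn (relP j) {x : V j | (⟨j, x⟩ : Σ i, V i) ∈ S} := by
  constructor
  · intro hS
    have hblock : ∀ j : ZMod (2*r+1),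
        AcyclicIn (relP j) {x : V j | (⟨j, x⟩ : Σ i, V i) ∈ S} := by
      intro j a ha b hb c hc hab hbc
      have h1 : compTournRel r relP ⟨j,a⟩ ⟨j,b⟩ := Or.inl ⟨rfl, hab⟩
      have h2 : compTournRel r relP ⟨j,b⟩ ⟨j,c⟩ := Or.inl ⟨rfl, hbc⟩
      have h3 := hS _ ha _ hb _ hc h1 h2
      rcases h3 with ⟨h, hrel⟩ | ⟨hne, _⟩
      · exact hrel
      · exact absurd rfl hne
    by_cases hSne : S.Nonempty
    · obtain ⟨x0, hx0⟩ := hSne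
      set B : Set (ZMod (2*r+1)) := {j | ∃ x : V j, (⟨j, x⟩ : Σ i, V i) ∈ S} with hB
      set Rb : ZMod (2*r+1) → ZMod (2*r+1) → Prop :=
        fun x y => x ∈ B ∧ y ∈ B ∧ hrRel r x y with hRb
      have htrans : ∀ x y z, Rb x y → Rb y z → Rb x z := by
        rintro x y z ⟨hxB, hyB, hxy⟩ ⟨-, hzB, hyz⟩
        refine ⟨hxB, hzB, ?_⟩
        obtain ⟨ax, hax⟩ := hxB
        obtain ⟨ay, hay⟩ := hyB
        obtain ⟨az, haz⟩ := hzB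
        have hxyne : x ≠ y := fun h => hr_irrefl r y (by rw [h] at hxy; exact hxy)
        have hyzne : y ≠ z := fun h => hr_irrefl r z (by rw [h] at hyz; exact hyz)
        have hxzne : x ≠ z := by
          intro h; subst h
          exact hr_asymm r hxy hyz
        have h1 : compTournRel r relP ⟨x,ax⟩ ⟨y,ay⟩ := Or.inr ⟨hxyne, hxy⟩
        have h2 : compTournRel r relP ⟨y,ay⟩ ⟨z,az⟩ := Or.inr ⟨hyzne, hyz⟩
        have h3 := hS _ hax _ hay _ haz h1 h2
        rcases h3 with ⟨h, _⟩ | ⟨_, hh⟩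
        · exact absurd h hxzne
        · exact hh
      have hirr : ∀ x, ¬ Rb x x := fun x h => hr_irrefl r x h.2.2
      have hwf : WellFounded Rb :=
        @Finite.wellFounded_of_trans_of_irrefl _ _ Rb ⟨htrans⟩ ⟨hirr⟩
      have hBne : B.Nonempty := ⟨x0.1, x0.2, hx0⟩
      obtain ⟨i, hiB, hmin⟩ := hwf.has_min B hBne
      refine ⟨i, ?_, hblock⟩
      intro x hx
      have hxB : x.1 ∈ B := ⟨x.2, hx⟩
      by_cases hxi : x.1 = i
      · exact ⟨0, Nat.zero_le r, by rw [hxi]; simp⟩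
      · have hni : ¬ hrRel r x.1 i := fun h => hmin x.1 hxB ⟨hxB, hiB, h⟩
        have hix : hrRel r i x.1 := (hr_total r (Ne.symm hxi)).resolve_right hni
        obtain ⟨l, h1, h2, h3⟩ := hix
        exact ⟨l, h2, h3⟩
    · exact ⟨0, fun x hx => absurd ⟨x, hx⟩ hSne, hblock⟩
  · rintro ⟨i, hwin, hblock⟩
    rintro ⟨j1,x1⟩ h1 ⟨j2,x2⟩ h2 ⟨j3,x3⟩ h3 hab hbc
    obtain ⟨l1, hl1, he1⟩ := hwin _ h1
    obtain ⟨l2, hl2, he2⟩ := hwin _ h2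
    obtain ⟨l3, hl3, he3⟩ := hwin _ h3
    have he1' : j1 = i + (l1 : ZMod (2*r+1)) := he1
    have he2' : j2 = i + (l2 : ZMod (2*r+1)) := he2
    have he3' : j3 = i + (l3 : ZMod (2*r+1)) := he3
    rcases hab with ⟨h12, hrel12⟩ | ⟨hne12, hhr12⟩ <;>
      rcases hbc with ⟨h23, hrel23⟩ | ⟨hne23, hhr23⟩
    · have h12' : j1 = j2 := h12
      subst h12'
      have h23' : j1 = j3 := h23
      subst h23'
      exact Or.inl ⟨rfl, hblock _ x1 h1 x2 h2 x3 h3 hrel12 hrel23⟩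
    · have h12' : j1 = j2 := h12
      subst h12'
      exact Or.inr ⟨hne23, hhr23⟩
    · have h23' : j2 = j3 := h23
      subst h23'
      exact Or.inr ⟨hne12, hhr12⟩
    · have hhr12' : hrRel r j1 j2 := hhr12
      have hhr23' : hrRel r j2 j3 := hhr23
      rw [he1', he2'] at hhr12'
      rw [he2', he3'] at hhr23'
      have hlt12 : l1 < l2 := (hr_offset r i hl1 hl2).mp hhr12'
      have hlt23 : l2 < l3 := (hr_offset r i hl2 hl3).mp hhr23'
      have hne13 : j1 ≠ j3 := by
        intro h
        rw [he1', he3'] at h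
        exact absurd (hr_offset_inj r i hl1 hl3 h) (by omega)
      refine Or.inr ⟨hne13, ?_⟩
      show hrRel r j1 j3
      rw [he1', he3']
      exact (hr_offset r i hl1 hl3).mpr (hlt12.trans hlt23)
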